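/- Suppose that for every (μ, π) ∈ Λ_M × Λ_Π the projected Bellman operator Π_{f_{n,μ,π}} T_π is a √γ-contraction in the norm ‖·‖_{f_{n,μ,π}} and X^⊤ D_{f_{n,μ,π}} X is positive definite (as holds when n exceeds the thresholds n₁(μ,π), n₂(μ,π) of Lemmas 3 and 6 uniformly over Λ_M × Λ_Π). Define g_{μ,π}(w) := X^⊤ D_{f_{n,μ,π}} (T_π(Xw) − Xw) and z_{μ,π}^η(w) := w + η g_{μ,π}(w), and let w_{n,μ,π} be the unique weight vector with Π_{f_{n,μ,π}} T_π (X w_{n,μ,π}) = X w_{n,μ,π}. Then there exists η₀ > 0 such that for every η ∈ (0, η₀) there is β_η ∈ (0,1) with ‖z_{μ,π}^η(w) − w_{n,μ,π}‖ ≤ β_η ‖w − w_{n,μ,π}‖ for all μ ∈ Λ_M, π ∈ Λ_Π and all w ∈ ℝ^K. -/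

import Mathlib

open Matrix Finset

noncomputable section

/-- State-transition matrix `P_π(s,s') = Σ_a π(a|s) p(s'|s,a)` induced by a policy. -/
def Pmat {S A : Type} [Fintype S] [Fintype A] (p : S → A → S → ℝ) (π : S → A → ℝ) :
    Matrix S S ℝ :=
  Matrix.of fun s s' => ∑ a, π s a * p s a s'

/-- The truncated weighting vector `f_{n,μ,π} := Σ_{j=0}^n γ^j (P_π^⊤)^j D_μ i`. -/
def fvec {S A : Type} [Fintype S] [DecidableEq S] [Fintype A] (γ : ℝ)
    (p : S → A → S → ℝ) (i : S → ℝ) (dstat : (S → A → ℝ) → S → ℝ) (n : ℕ)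
    (μ π : S → A → ℝ) : S → ℝ :=
  fun s => ∑ j ∈ Finset.range (n + 1),
    γ ^ j * ((((Pmat p π)ᵀ) ^ j).mulVec fun s' => dstat μ s' * i s') s

/-- Weighted squared seminorm `‖v‖_g² = Σ_s g(s) v(s)²`. -/
def wsq {S : Type} [Fintype S] (g v : S → ℝ) : ℝ := ∑ s, g s * (v s) ^ 2

/-- The Bellman operator `T_π v = r_π + γ P_π v`. -/
def bellman {S A : Type} [Fintype S] [Fintype A] (γ : ℝ) (p : S → A → S → ℝ)
    (r : S → A → ℝ) (π : S → A → ℝ) (v : S → ℝ) : S → ℝ :=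
  fun s => (∑ a, π s a * r s a) + γ * (Pmat p π).mulVec v s

private lemma quad_zero {a b : ℝ} (hb : 0 ≤ b) (h : ∀ t : ℝ, 0 ≤ t * a + t ^ 2 * b) : a = 0 := by
  have hb1 : (0:ℝ) < b + 1 := by linarith
  obtain ⟨x, hx⟩ : ∃ x : ℝ, a = x * (b + 1) := ⟨a / (b + 1), (div_mul_cancel₀ a hb1.ne').symm⟩
  have h5 : x * a = x ^ 2 * b + x ^ 2 := by rw [hx]; ring
  have h6 : x ^ 2 ≤ 0 := by nlinarith [h (-x)]
  have h7 : x = 0 := by nlinarith [sq_nonneg x]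
  rw [hx, h7, zero_mul]

private lemma wCS {S : Type} [Fintype S] (f a b : S → ℝ) (hf : ∀ s, 0 ≤ f s) :
    (∑ s, f s * (a s * b s)) ^ 2 ≤ (∑ s, f s * (a s) ^ 2) * (∑ s, f s * (b s) ^ 2) := by
  have h := Finset.sum_mul_sq_le_sq_mul_sq Finset.univ
    (fun s => Real.sqrt (f s) * a s) (fun s => Real.sqrt (f s) * b s)
  have e1 : ∀ s : S, (Real.sqrt (f s) * a s) * (Real.sqrt (f s) * b s) = f s * (a s * b s) := by
    intro s
    rw [show (Real.sqrt (f s) * a s) * (Real.sqrt (f s) * b s)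
        = (Real.sqrt (f s) * Real.sqrt (f s)) * (a s * b s) by ring,
      Real.mul_self_sqrt (hf s)]
  have e2 : ∀ s : S, (Real.sqrt (f s) * a s) ^ 2 = f s * (a s) ^ 2 := by
    intro s; rw [mul_pow, Real.sq_sqrt (hf s)]
  have e3 : ∀ s : S, (Real.sqrt (f s) * b s) ^ 2 = f s * (b s) ^ 2 := by
    intro s; rw [mul_pow, Real.sq_sqrt (hf s)]
  calc (∑ s, f s * (a s * b s)) ^ 2
      = (∑ s, (Real.sqrt (f s) * a s) * (Real.sqrt (f s) * b s)) ^ 2 := by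
        rw [Finset.sum_congr rfl fun s _ => (e1 s).symm]
    _ ≤ (∑ s, (Real.sqrt (f s) * a s) ^ 2) * (∑ s, (Real.sqrt (f s) * b s) ^ 2) := h
    _ = (∑ s, f s * (a s) ^ 2) * (∑ s, f s * (b s) ^ 2) := by
        simp only [e2, e3]

private lemma stat_pow {S : Type} [Fintype S] [DecidableEq S] (P : Matrix S S ℝ)
    (d : S → ℝ) (hd : ∀ s', ∑ s, d s * P s s' = d s') (m : ℕ) :
    ∀ s', ∑ s, d s * (P ^ m) s s' = d s' := by
  induction m with
  | zero => intro s'; simp [Matrix.one_apply]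
  | succ m ih =>
    intro s'
    rw [pow_succ]
    simp only [Matrix.mul_apply]
    calc ∑ s, d s * ∑ t, (P ^ m) s t * P t s'
        = ∑ s, ∑ t, d s * (P ^ m) s t * P t s' := by
          exact Finset.sum_congr rfl fun s _ => by rw [Finset.mul_sum]; exact Finset.sum_congr rfl fun t _ => by ring
      _ = ∑ t, (∑ s, d s * (P ^ m) s t) * P t s' := by
          rw [Finset.sum_comm]; exact Finset.sum_congr rfl fun t _ => by rw [Finset.sum_mul]
      _ = ∑ t, d t * P t s' := Finset.sum_congr rfl fun t _ => by rw [ih t]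
      _ = d s' := hd s'

private lemma pow_stoch {S : Type} [Fintype S] [DecidableEq S] (P : Matrix S S ℝ)
    (h0 : ∀ s s', 0 ≤ P s s') (h1 : ∀ s, ∑ s', P s s' = 1) (j : ℕ) :
    (∀ s s', 0 ≤ (P ^ j) s s') ∧ (∀ s, ∑ s', (P ^ j) s s' = 1) := by
  induction j with
  | zero =>
    constructor
    · intro s s'; simp only [pow_zero, Matrix.one_apply]; positivity
    · intro s; simp [Matrix.one_apply]
  | succ j ih =>
    constructor
    · intro s s'; rw [pow_succ, Matrix.mul_apply]
      exact Finset.sum_nonneg fun t _ => mul_nonneg (ih.1 s t) (h0 t s')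
    · intro s
      rw [pow_succ]
      simp only [Matrix.mul_apply]
      rw [Finset.sum_comm]
      calc ∑ t, ∑ s', (P ^ j) s t * P t s'
          = ∑ t, (P ^ j) s t * ∑ s', P t s' := by
            exact Finset.sum_congr rfl fun t _ => by rw [Finset.mul_sum]
        _ = ∑ t, (P ^ j) s t := by
            exact Finset.sum_congr rfl fun t _ => by rw [h1 t, mul_one]
        _ = 1 := ih.2 s

private lemma stat_unique {S : Type} [Fintype S] [DecidableEq S] (P : Matrix S S ℝ)
    (m : ℕ) (hPm : ∀ s s', 0 < (P ^ m) s s')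
    (d e : S → ℝ) (hd0 : ∀ s, 0 ≤ d s) (hd1 : ∑ s, d s = 1)
    (hd : ∀ s', ∑ s, d s * P s s' = d s')
    (he0 : ∀ s, 0 < e s) (he1 : ∑ s, e s = 1)
    (he : ∀ s', ∑ s, e s * P s s' = e s') : d = e := by
  cases isEmpty_or_nonempty S with
  | inl hS => simp [Finset.univ_eq_empty] at hd1
  | inr hS =>
  have hdm := stat_pow P d hd m
  have hem := stat_pow P e he m
  obtain ⟨s0, -, hs0⟩ := Finset.exists_min_image Finset.univ (fun s => d s / e s)
    ⟨hS.some, Finset.mem_univ _⟩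
  set c := d s0 / e s0 with hc
  have hge : ∀ s, c * e s ≤ d s := fun s =>
    (le_div_iff₀ (he0 s)).mp (hs0 s (Finset.mem_univ s))
  have hsum : ∑ s, (c * e s) * (P ^ m) s s0 = ∑ s, d s * (P ^ m) s s0 := by
    rw [hdm s0]
    have h5 : ∑ s, (c * e s) * (P ^ m) s s0 = c * ∑ s, e s * (P ^ m) s s0 := by
      rw [Finset.mul_sum]; exact Finset.sum_congr rfl fun s _ => by ring
    rw [h5, hem s0, hc, div_mul_cancel₀ _ (he0 s0).ne']
  have hterm : ∀ s ∈ Finset.univ, (c * e s) * (P ^ m) s s0 ≤ d s * (P ^ m) s s0 := fun s _ =>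
    mul_le_mul_of_nonneg_right (hge s) (hPm s s0).le
  have heq := (Finset.sum_eq_sum_iff_of_le hterm).mp hsum
  have hde : ∀ s, d s = c * e s := fun s =>
    (mul_right_cancel₀ (hPm s s0).ne' (heq s (Finset.mem_univ s))).symm
  have hc1 : c = 1 := by
    have h8 : ∑ s, d s = ∑ s, c * e s := Finset.sum_congr rfl fun s _ => hde s
    rw [hd1, ← Finset.mul_sum, he1, mul_one] at h8
    exact h8.symm
  funext s
  rw [hde s, hc1, one_mul]

private lemma cont_pow_entry {S A : Type} [Fintype S] [DecidableEq S] [Fintype A]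
    (p : S → A → S → ℝ) (j : ℕ) :
    ∀ s s' : S, Continuous (fun π : S → A → ℝ => ((Pmat p π)ᵀ ^ j) s s') := by
  induction j with
  | zero =>
    intro s s'
    simp only [pow_zero, Matrix.one_apply]
    exact continuous_const
  | succ j ih =>
    intro s s'
    simp only [pow_succ, Matrix.mul_apply, Matrix.transpose_apply, Pmat, Matrix.of_apply]
    apply continuous_finset_sum
    intro t _
    exact (ih s t).mul <| continuous_finset_sum _ fun a _ =>
      (by fun_prop)

private lemma XtD_mulVec {S : Type} [Fintype S] [DecidableEq S] {K : ℕ}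
    (X : Matrix S (Fin K) ℝ) (f v : S → ℝ) (k : Fin K) :
    ((Xᵀ * Matrix.diagonal f).mulVec v) k = ∑ s, f s * (X s k * v s) := by
  simp only [Matrix.mulVec, dotProduct, Matrix.mul_diagonal, Matrix.transpose_apply]
  exact Finset.sum_congr rfl fun s _ => by ring

private lemma quad_id {S : Type} [Fintype S] [DecidableEq S] {K : ℕ} (X : Matrix S (Fin K) ℝ)
    (f : S → ℝ) (w : Fin K → ℝ) :
    ∑ k, w k * ((Xᵀ * Matrix.diagonal f * X).mulVec w) k
      = ∑ s, f s * (X.mulVec w s) ^ 2 := by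
  have h1 : (Xᵀ * Matrix.diagonal f * X).mulVec w
      = (Xᵀ * Matrix.diagonal f).mulVec (X.mulVec w) := by
    rw [← Matrix.mulVec_mulVec]
  rw [h1]
  calc ∑ k, w k * ((Xᵀ * Matrix.diagonal f).mulVec (X.mulVec w)) k
      = ∑ k, ∑ s, w k * (f s * (X s k * X.mulVec w s)) := by
        refine Finset.sum_congr rfl fun k _ => ?_
        rw [XtD_mulVec, Finset.mul_sum]
    _ = ∑ s, ∑ k, w k * (f s * (X s k * X.mulVec w s)) := Finset.sum_comm
    _ = ∑ s, f s * (X.mulVec w s) ^ 2 := by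
        refine Finset.sum_congr rfl fun s _ => ?_
        have : ∑ k, w k * (f s * (X s k * X.mulVec w s))
            = (∑ k, X s k * w k) * (f s * X.mulVec w s) := by
          rw [Finset.sum_mul]
          exact Finset.sum_congr rfl fun k _ => by ring
        rw [this]
        have hu : X.mulVec w s = ∑ k, X s k * w k := rfl
        rw [← hu]; ring

private lemma key_estimate {S : Type} [Fintype S] [DecidableEq S] {K : ℕ}
    (X : Matrix S (Fin K) ℝ) (f : S → ℝ) (γ F c η : ℝ)
    (hγ0 : 0 ≤ γ) (hγ1 : γ < 1) (hF0 : 0 ≤ F)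
    (hf0 : ∀ s, 0 ≤ f s) (hfF : ∀ s, f s ≤ F)
    (hcpos : 0 < c) (hη0 : 0 < η)
    (hη1 : η * (4 * F * (∑ k, ∑ s, X s k ^ 2) + 1) ≤ 1 - Real.sqrt γ)
    (w wst : Fin K → ℝ) (Tv Pv : S → ℝ)
    (horth : ∀ k : Fin K, ∑ s, f s * (X s k * (Pv s - Tv s)) = 0)
    (hq : ∑ s, f s * (Pv s - X.mulVec wst s) ^ 2
        ≤ γ * ∑ s, f s * (X.mulVec w s - X.mulVec wst s) ^ 2)
    (hlb : c * (∑ k, (w k - wst k) ^ 2)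
        ≤ ∑ s, f s * (X.mulVec w s - X.mulVec wst s) ^ 2) :
    ∑ k, (w k + η * ((Xᵀ * Matrix.diagonal f).mulVec (Tv - X.mulVec w)) k - wst k) ^ 2
      ≤ (1 - η * (1 - Real.sqrt γ) * c) * ∑ k, (w k - wst k) ^ 2 := by
  set u : S → ℝ := fun s => X.mulVec w s - X.mulVec wst s with hu
  set q : S → ℝ := fun s => Pv s - X.mulVec wst s with hqd
  set Δ : Fin K → ℝ := (Xᵀ * Matrix.diagonal f).mulVec (Tv - X.mulVec w) with hΔd
  have hq' : (∑ s, f s * q s ^ 2) ≤ γ * ∑ s, f s * u s ^ 2 := hq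
  have hlb' : c * (∑ k, (w k - wst k) ^ 2) ≤ ∑ s, f s * u s ^ 2 := hlb
  have hWu0 : 0 ≤ ∑ s, f s * u s ^ 2 :=
    Finset.sum_nonneg fun s _ => mul_nonneg (hf0 s) (sq_nonneg _)
  have hWq0 : 0 ≤ ∑ s, f s * q s ^ 2 :=
    Finset.sum_nonneg fun s _ => mul_nonneg (hf0 s) (sq_nonneg _)
  have hsγ1 : Real.sqrt γ < 1 := by
    rw [show (1:ℝ) = Real.sqrt 1 from (Real.sqrt_one).symm]
    exact Real.sqrt_lt_sqrt hγ0 hγ1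
  -- formula for Δ
  have hΔf : ∀ k, Δ k = ∑ s, f s * (X s k * (q s - u s)) := by
    intro k
    have h1 : Δ k = ∑ s, f s * (X s k * (Tv s - X.mulVec w s)) := by
      rw [hΔd, XtD_mulVec]
      exact Finset.sum_congr rfl fun s _ => by rw [Pi.sub_apply]
    rw [h1, ← add_zero (∑ s, f s * (X s k * (Tv s - X.mulVec w s))), ← horth k,
      ← Finset.sum_add_distrib]
    refine Finset.sum_congr rfl fun s _ => ?_
    simp only [hqd, hu]
    ring
  -- Cauchy-Schwarz bound on the cross term
  have hCS := wCS f u q hf0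
  have ha1 : (∑ s, f s * (u s * q s)) ≤ Real.sqrt γ * ∑ s, f s * u s ^ 2 := by
    have h1 : (∑ s, f s * (u s * q s)) ^ 2 ≤ γ * (∑ s, f s * u s ^ 2) ^ 2 := by
      nlinarith [hCS, hq', hWu0, hWq0]
    calc (∑ s, f s * (u s * q s)) ≤ |∑ s, f s * (u s * q s)| := le_abs_self _
      _ = Real.sqrt ((∑ s, f s * (u s * q s)) ^ 2) := (Real.sqrt_sq_eq_abs _).symm
      _ ≤ Real.sqrt (γ * (∑ s, f s * u s ^ 2) ^ 2) := Real.sqrt_le_sqrt h1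
      _ = Real.sqrt γ * Real.sqrt ((∑ s, f s * u s ^ 2) ^ 2) := Real.sqrt_mul hγ0 _
      _ = Real.sqrt γ * ∑ s, f s * u s ^ 2 := by rw [Real.sqrt_sq hWu0]
  -- dot product identity
  have hdot : (∑ k, (w k - wst k) * Δ k)
      = (∑ s, f s * (u s * q s)) - ∑ s, f s * u s ^ 2 := by
    calc ∑ k, (w k - wst k) * Δ k
        = ∑ k, ∑ s, (w k - wst k) * (f s * (X s k * (q s - u s))) := by
          refine Finset.sum_congr rfl fun k _ => ?_
          rw [hΔf k, Finset.mul_sum]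
      _ = ∑ s, ∑ k, (w k - wst k) * (f s * (X s k * (q s - u s))) := Finset.sum_comm
      _ = ∑ s, f s * (u s * (q s - u s)) := by
          refine Finset.sum_congr rfl fun s _ => ?_
          have hus : u s = ∑ k, X s k * (w k - wst k) := by
            simp only [hu]
            rw [show (X.mulVec w s : ℝ) = ∑ k, X s k * w k from rfl,
              show (X.mulVec wst s : ℝ) = ∑ k, X s k * wst k from rfl,
              ← Finset.sum_sub_distrib]
            exact Finset.sum_congr rfl fun k _ => by ring
          rw [show (∑ k, (w k - wst k) * (f s * (X s k * (q s - u s))))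
              = (∑ k, X s k * (w k - wst k)) * (f s * (q s - u s)) from by
                rw [Finset.sum_mul]
                exact Finset.sum_congr rfl fun k _ => by ring,
            ← hus]
          ring
      _ = (∑ s, f s * (u s * q s)) - ∑ s, f s * u s ^ 2 := by
          rw [← Finset.sum_sub_distrib]
          exact Finset.sum_congr rfl fun s _ => by ring
  -- norm bound on Δ
  have hD2 : (∑ k, Δ k ^ 2)
      ≤ (4 * F * (∑ k, ∑ s, X s k ^ 2)) * ∑ s, f s * u s ^ 2 := by
    have hDk : ∀ k, Δ k ^ 2 ≤ (F * ∑ s, X s k ^ 2) * (4 * ∑ s, f s * u s ^ 2) := by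
      intro k
      have h1 := wCS f (fun s => X s k) (fun s => q s - u s) hf0
      have h2 : (∑ s, f s * (X s k) ^ 2) ≤ F * ∑ s, X s k ^ 2 := by
        rw [Finset.mul_sum]
        exact Finset.sum_le_sum fun s _ => mul_le_mul_of_nonneg_right (hfF s) (sq_nonneg _)
      have h3 : (∑ s, f s * (q s - u s) ^ 2) ≤ 4 * ∑ s, f s * u s ^ 2 := by
        have h4 : (∑ s, f s * (q s - u s) ^ 2)
            ≤ 2 * (∑ s, f s * q s ^ 2) + 2 * (∑ s, f s * u s ^ 2) := by
          rw [Finset.mul_sum, Finset.mul_sum, ← Finset.sum_add_distrib]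
          exact Finset.sum_le_sum fun s _ => by nlinarith [hf0 s, sq_nonneg (q s + u s)]
        nlinarith [hq', hWu0]
      have h5 : Δ k ^ 2 ≤ (∑ s, f s * (X s k) ^ 2) * (∑ s, f s * (q s - u s) ^ 2) := by
        rw [hΔf k]; exact h1
      have h6 : (0:ℝ) ≤ ∑ s, f s * (q s - u s) ^ 2 :=
        Finset.sum_nonneg fun s _ => mul_nonneg (hf0 s) (sq_nonneg _)
      have h7 : (0:ℝ) ≤ F * ∑ s, X s k ^ 2 :=
        mul_nonneg hF0 (Finset.sum_nonneg fun s _ => sq_nonneg _)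
      calc Δ k ^ 2 ≤ (∑ s, f s * (X s k) ^ 2) * (∑ s, f s * (q s - u s) ^ 2) := h5
        _ ≤ (F * ∑ s, X s k ^ 2) * (4 * ∑ s, f s * u s ^ 2) := mul_le_mul h2 h3 h6 h7
    calc ∑ k, Δ k ^ 2 ≤ ∑ k, (F * ∑ s, X s k ^ 2) * (4 * ∑ s, f s * u s ^ 2) :=
          Finset.sum_le_sum fun k _ => hDk k
      _ = (4 * F * (∑ k, ∑ s, X s k ^ 2)) * ∑ s, f s * u s ^ 2 := by
          rw [← Finset.sum_mul, ← Finset.mul_sum]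
          ring
  -- expansion
  have hexp : (∑ k, (w k + η * Δ k - wst k) ^ 2)
      = (∑ k, (w k - wst k) ^ 2) + (2 * η) * (∑ k, (w k - wst k) * Δ k)
        + η ^ 2 * ∑ k, Δ k ^ 2 := by
    rw [Finset.mul_sum, Finset.mul_sum, ← Finset.sum_add_distrib, ← Finset.sum_add_distrib]
    exact Finset.sum_congr rfl fun k _ => by ring
  rw [hexp]
  have s1 : (2 * η) * (∑ k, (w k - wst k) * Δ k)
      ≤ (2 * η) * ((Real.sqrt γ - 1) * ∑ s, f s * u s ^ 2) := by
    apply mul_le_mul_of_nonneg_left _ (by positivity)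
    rw [hdot]; linarith [ha1]
  have s2 : η ^ 2 * (∑ k, Δ k ^ 2)
      ≤ η * ((1 - Real.sqrt γ) * ∑ s, f s * u s ^ 2) := by
    have hstep : η * (4 * F * (∑ k, ∑ s, X s k ^ 2)) ≤ 1 - Real.sqrt γ := by nlinarith [hη1, hη0]
    calc η ^ 2 * (∑ k, Δ k ^ 2)
        ≤ η ^ 2 * ((4 * F * (∑ k, ∑ s, X s k ^ 2)) * ∑ s, f s * u s ^ 2) :=
          mul_le_mul_of_nonneg_left hD2 (sq_nonneg η)
      _ = (η * (4 * F * (∑ k, ∑ s, X s k ^ 2))) * (η * ∑ s, f s * u s ^ 2) := by ring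
      _ ≤ (1 - Real.sqrt γ) * (η * ∑ s, f s * u s ^ 2) := by
          apply mul_le_mul_of_nonneg_right hstep (by positivity)
      _ = η * ((1 - Real.sqrt γ) * ∑ s, f s * u s ^ 2) := by ring
  have s3 : η * ((1 - Real.sqrt γ) * (c * ∑ k, (w k - wst k) ^ 2))
      ≤ η * ((1 - Real.sqrt γ) * ∑ s, f s * u s ^ 2) := by
    apply mul_le_mul_of_nonneg_left _ hη0.le
    exact mul_le_mul_of_nonneg_left hlb' (by linarith)
  nlinarith [s1, s2, s3]

private def Phi {S A : Type} [Fintype S] [DecidableEq S] [Fintype A] (γ : ℝ)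
    (p : S → A → S → ℝ) (i : S → ℝ) (n : ℕ) {K : ℕ} (X : Matrix S (Fin K) ℝ)
    (z : ((S → A → ℝ) × (S → A → ℝ)) × ((Fin K → ℝ) × (S → ℝ))) : ℝ :=
  ∑ s, (∑ j ∈ Finset.range (n + 1), γ ^ j *
      ∑ s', ((Pmat p z.1.2)ᵀ ^ j) s s' * (z.2.2 s' * i s')) * (X.mulVec z.2.1 s) ^ 2

private lemma Phi_cont {S A : Type} [Fintype S] [DecidableEq S] [Fintype A] (γ : ℝ)
    (p : S → A → S → ℝ) (i : S → ℝ) (n : ℕ) {K : ℕ} (X : Matrix S (Fin K) ℝ) :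
    Continuous (Phi γ p i n X) := by
  unfold Phi
  apply continuous_finset_sum
  intro s _
  apply Continuous.mul
  · apply continuous_finset_sum
    intro j _
    apply Continuous.mul continuous_const
    apply continuous_finset_sum
    intro s' _
    exact ((cont_pow_entry p j s s').comp (continuous_snd.comp continuous_fst)).mul
      (((continuous_apply s').comp (continuous_snd.comp continuous_snd)).mul continuous_const)
  · have h : Continuous fun z : ((S → A → ℝ) × (S → A → ℝ)) × ((Fin K → ℝ) × (S → ℝ)) =>
        ∑ k, X s k * z.2.1 k :=
      continuous_finset_sum _ fun k _ =>
        continuous_const.mul ((continuous_apply k).comp (continuous_fst.comp continuous_snd))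
    exact h.pow 2

/-- uniform contraction of the update map
`z_{μ,π}^η(w) = w + η g_{μ,π}(w)` towards the fixed point `w_{n,μ,π}`,
for all small enough `η > 0`, uniformly over `(μ,π) ∈ Λ_M × Λ_Π`. -/
theorem uniform_update_contraction
    {S A : Type} [Fintype S] [DecidableEq S] [Fintype A] {K : ℕ}
    (γ : ℝ) (hγ0 : 0 ≤ γ) (hγ1 : γ < 1)
    (p : S → A → S → ℝ) (hp0 : ∀ s a s', 0 ≤ p s a s') (hp1 : ∀ s a, ∑ s', p s a s' = 1)
    (r : S → A → ℝ)
    (i : S → ℝ) (hi : ∀ s, 0 < i s)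
    (μw πw : (Fin K → ℝ) → S → A → ℝ)
    (hμcont : Continuous μw) (hπcont : Continuous πw)
    -- every behavior policy in the closure Λ_M is positive, a probability, ergodic
    (hLamM : ∀ μ ∈ closure (Set.range μw), (∀ s a, 0 < μ s a) ∧ (∀ s, ∑ a, μ s a = 1) ∧
      ∃ T : ℕ, ∀ s s', 0 < ((Pmat p μ) ^ (T + 1)) s s')
    (hLamPi : ∀ π ∈ closure (Set.range πw), (∀ s a, 0 ≤ π s a) ∧ (∀ s, ∑ a, π s a = 1))
    -- stationary distributions of the behavior policies
    (dstat : (S → A → ℝ) → S → ℝ)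
    (hdstat : ∀ μ ∈ closure (Set.range μw), (∀ s, 0 < dstat μ s) ∧ (∑ s, dstat μ s = 1) ∧
      ∀ s', ∑ s, dstat μ s * Pmat p μ s s' = dstat μ s')
    (n : ℕ)
    (X : Matrix S (Fin K) ℝ) (hX : Function.Injective X.mulVec)
    -- the `f_{n,μ,π}`-weighted projection onto the column space of `X`
    (Proj : (S → A → ℝ) → (S → A → ℝ) → (S → ℝ) → (S → ℝ))
    (hProj : ∀ μ ∈ closure (Set.range μw), ∀ π ∈ closure (Set.range πw), ∀ v : S → ℝ,
      (∃ w : Fin K → ℝ, Proj μ π v = X.mulVec w) ∧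
      ∀ w : Fin K → ℝ, wsq (fvec γ p i dstat n μ π) (Proj μ π v - v) ≤
        wsq (fvec γ p i dstat n μ π) (X.mulVec w - v))
    -- hypothesis: `Π_{f_{n,μ,π}} T_π` is a `√γ`-contraction in `‖·‖_{f_{n,μ,π}}`
    (hcontr : ∀ μ ∈ closure (Set.range μw), ∀ π ∈ closure (Set.range πw),
      ∀ v₁ v₂ : S → ℝ,
        Real.sqrt (wsq (fvec γ p i dstat n μ π)
            (Proj μ π (bellman γ p r π v₁) - Proj μ π (bellman γ p r π v₂))) ≤
          Real.sqrt γ * Real.sqrt (wsq (fvec γ p i dstat n μ π) (v₁ - v₂)))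
    -- hypothesis: `Xᵀ D_{f_{n,μ,π}} X` is positive definite
    (hpd : ∀ μ ∈ closure (Set.range μw), ∀ π ∈ closure (Set.range πw),
      ∀ w : Fin K → ℝ, w ≠ 0 →
        0 < ∑ k, w k * ((Xᵀ * Matrix.diagonal (fvec γ p i dstat n μ π) * X).mulVec w) k)
    -- `w_{n,μ,π}`: the unique fixed point of `Π_{f_{n,μ,π}} T_π` in the parameter space
    (wfix : (S → A → ℝ) → (S → A → ℝ) → (Fin K → ℝ))
    (hwfix : ∀ μ ∈ closure (Set.range μw), ∀ π ∈ closure (Set.range πw),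
      Proj μ π (bellman γ p r π (X.mulVec (wfix μ π))) = X.mulVec (wfix μ π))
    (huniq : ∀ μ ∈ closure (Set.range μw), ∀ π ∈ closure (Set.range πw),
      ∀ w : Fin K → ℝ, Proj μ π (bellman γ p r π (X.mulVec w)) = X.mulVec w →
        w = wfix μ π) :
    ∃ η₀ > (0 : ℝ), ∀ η : ℝ, 0 < η → η < η₀ →
      ∃ β : ℝ, 0 < β ∧ β < 1 ∧
        ∀ μ ∈ closure (Set.range μw), ∀ π ∈ closure (Set.range πw), ∀ w : Fin K → ℝ,
          Real.sqrt (∑ k, (w k +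
              η * ((Xᵀ * Matrix.diagonal (fvec γ p i dstat n μ π)).mulVec
                (bellman γ p r π (X.mulVec w) - X.mulVec w)) k - wfix μ π k) ^ 2) ≤
            β * Real.sqrt (∑ k, (w k - wfix μ π k) ^ 2) := by
  classical
  set LM := closure (Set.range μw) with hLMdef
  set LP := closure (Set.range πw) with hLPdef
  have hμ0 : μw 0 ∈ LM := subset_closure (Set.mem_range_self 0)
  cases isEmpty_or_nonempty S with
  | inl hSE =>
    exfalso
    have h1 := (hdstat _ hμ0).2.1
    rw [Finset.univ_eq_empty, Finset.sum_empty] at h1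
    exact zero_ne_one h1
  | inr hSN =>
  -- stochasticity of Pmat for target policies
  have hPpi0 : ∀ π ∈ LP, ∀ s s', 0 ≤ Pmat p π s s' := fun π hπ s s' =>
    Finset.sum_nonneg fun a _ => mul_nonneg ((hLamPi π hπ).1 s a) (hp0 s a s')
  have hPpi1 : ∀ π ∈ LP, ∀ s, ∑ s', Pmat p π s s' = 1 := by
    intro π hπ s
    calc ∑ s', Pmat p π s s' = ∑ s', ∑ a, π s a * p s a s' := rfl
      _ = ∑ a, ∑ s', π s a * p s a s' := Finset.sum_comm
      _ = ∑ a, π s a * ∑ s', p s a s' :=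
          Finset.sum_congr rfl fun a _ => (Finset.mul_sum _ _ _).symm
      _ = ∑ a, π s a := Finset.sum_congr rfl fun a _ => by rw [hp1 s a, mul_one]
      _ = 1 := (hLamPi π hπ).2 s
  have hent : ∀ π ∈ LP, ∀ j : ℕ, ∀ s s',
      0 ≤ ((Pmat p π)ᵀ ^ j) s s' ∧ ((Pmat p π)ᵀ ^ j) s s' ≤ 1 := by
    intro π hπ j s s'
    have hps := pow_stoch (Pmat p π) (hPpi0 π hπ) (hPpi1 π hπ) j
    rw [← Matrix.transpose_pow, Matrix.transpose_apply]
    refine ⟨hps.1 s' s, ?_⟩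
    calc (Pmat p π ^ j) s' s ≤ ∑ t, (Pmat p π ^ j) s' t :=
          Finset.single_le_sum (fun t _ => hps.1 s' t) (Finset.mem_univ s)
      _ = 1 := hps.2 s'
  -- bounds on the weighting vector f
  set F : ℝ := (n + 1 : ℝ) * ∑ s, i s with hFdef
  have hF0 : 0 ≤ F := mul_nonneg (by positivity) (Finset.sum_nonneg fun s _ => (hi s).le)
  have hfpos : ∀ μ ∈ LM, ∀ π ∈ LP, ∀ s, 0 ≤ fvec γ p i dstat n μ π s := by
    intro μ hμ π hπ s
    show 0 ≤ ∑ j ∈ Finset.range (n + 1),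
      γ ^ j * ∑ s', ((Pmat p π)ᵀ ^ j) s s' * (dstat μ s' * i s')
    apply Finset.sum_nonneg
    intro j _
    apply mul_nonneg (pow_nonneg hγ0 j)
    apply Finset.sum_nonneg
    intro s' _
    exact mul_nonneg (hent π hπ j s s').1
      (mul_nonneg ((hdstat μ hμ).1 s').le (hi s').le)
  have hfF : ∀ μ ∈ LM, ∀ π ∈ LP, ∀ s, fvec γ p i dstat n μ π s ≤ F := by
    intro μ hμ π hπ s
    have hd1 : ∀ s', dstat μ s' ≤ 1 := by
      intro s'
      rw [← (hdstat μ hμ).2.1]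
      exact Finset.single_le_sum (fun t _ => ((hdstat μ hμ).1 t).le) (Finset.mem_univ s')
    have hterm : ∀ j ∈ Finset.range (n + 1),
        γ ^ j * (∑ s', ((Pmat p π)ᵀ ^ j) s s' * (dstat μ s' * i s')) ≤ ∑ s', i s' := by
      intro j _
      have hin : (∑ s', ((Pmat p π)ᵀ ^ j) s s' * (dstat μ s' * i s')) ≤ ∑ s', i s' := by
        apply Finset.sum_le_sum
        intro s' _
        have hdi : 0 ≤ dstat μ s' * i s' :=
          mul_nonneg ((hdstat μ hμ).1 s').le (hi s').le
        have e1 : ((Pmat p π)ᵀ ^ j) s s' * (dstat μ s' * i s') ≤ 1 * (dstat μ s' * i s') :=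
          mul_le_mul_of_nonneg_right (hent π hπ j s s').2 hdi
        have e2 : dstat μ s' * i s' ≤ 1 * i s' :=
          mul_le_mul_of_nonneg_right (hd1 s') (hi s').le
        linarith
      have hin0 : 0 ≤ ∑ s', ((Pmat p π)ᵀ ^ j) s s' * (dstat μ s' * i s') :=
        Finset.sum_nonneg fun s' _ => mul_nonneg (hent π hπ j s s').1
          (mul_nonneg ((hdstat μ hμ).1 s').le (hi s').le)
      calc γ ^ j * (∑ s', ((Pmat p π)ᵀ ^ j) s s' * (dstat μ s' * i s'))
          ≤ 1 * (∑ s', ((Pmat p π)ᵀ ^ j) s s' * (dstat μ s' * i s')) :=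
            mul_le_mul_of_nonneg_right (pow_le_one₀ hγ0 hγ1.le) hin0
        _ ≤ ∑ s', i s' := by rw [one_mul]; exact hin
    calc fvec γ p i dstat n μ π s
        = ∑ j ∈ Finset.range (n + 1),
            γ ^ j * ∑ s', ((Pmat p π)ᵀ ^ j) s s' * (dstat μ s' * i s') := rfl
      _ ≤ ∑ _j ∈ Finset.range (n + 1), ∑ s', i s' := Finset.sum_le_sum hterm
      _ = F := by
          rw [Finset.sum_const, Finset.card_range, nsmul_eq_mul, hFdef]
          push_cast
          ring
  -- orthogonality of the projection
  have horth : ∀ μ ∈ LM, ∀ π ∈ LP, ∀ v : S → ℝ, ∀ wk : Fin K → ℝ,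
      ∑ s, fvec γ p i dstat n μ π s * (X.mulVec wk s * (Proj μ π v s - v s)) = 0 := by
    intro μ hμ π hπ v wk
    obtain ⟨⟨w0, hw0⟩, hmin⟩ := hProj μ hμ π hπ v
    have hf0 : ∀ s, 0 ≤ fvec γ p i dstat n μ π s := hfpos μ hμ π hπ
    have hb0 : 0 ≤ ∑ s, fvec γ p i dstat n μ π s * (X.mulVec wk s) ^ 2 :=
      Finset.sum_nonneg fun s _ => mul_nonneg (hf0 s) (sq_nonneg _)
    have hkey : (∑ s, fvec γ p i dstat n μ π s *
        ((X.mulVec w0 s - v s) * X.mulVec wk s)) = 0 := by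
      have hper : ∀ t : ℝ, 0 ≤ t * (2 * ∑ s, fvec γ p i dstat n μ π s *
          ((X.mulVec w0 s - v s) * X.mulVec wk s))
          + t ^ 2 * (∑ s, fvec γ p i dstat n μ π s * (X.mulVec wk s) ^ 2) := by
        intro t
        have hm := hmin (w0 + t • wk)
        have hXe : ∀ s, X.mulVec (w0 + t • wk) s - v s
            = (X.mulVec w0 s - v s) + t * X.mulVec wk s := by
          intro s
          rw [Matrix.mulVec_add, Matrix.mulVec_smul]
          simp [Pi.add_apply, Pi.smul_apply, smul_eq_mul]
          ring
        have hL : wsq (fvec γ p i dstat n μ π) (X.mulVec (w0 + t • wk) - v)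
            = (∑ s, fvec γ p i dstat n μ π s * (X.mulVec w0 s - v s) ^ 2)
              + (t * (2 * ∑ s, fvec γ p i dstat n μ π s *
                  ((X.mulVec w0 s - v s) * X.mulVec wk s))
                + t ^ 2 * (∑ s, fvec γ p i dstat n μ π s * (X.mulVec wk s) ^ 2)) := by
          calc wsq (fvec γ p i dstat n μ π) (X.mulVec (w0 + t • wk) - v)
              = ∑ s, fvec γ p i dstat n μ π s *
                  ((X.mulVec w0 s - v s) + t * X.mulVec wk s) ^ 2 := by
                unfold wsq
                exact Finset.sum_congr rfl fun s _ => by rw [Pi.sub_apply, hXe s]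
            _ = _ := by
                simp only [Finset.mul_sum]
                rw [← Finset.sum_add_distrib, ← Finset.sum_add_distrib]
                exact Finset.sum_congr rfl fun s _ => by ring
        have hR : wsq (fvec γ p i dstat n μ π) (Proj μ π v - v)
            = ∑ s, fvec γ p i dstat n μ π s * (X.mulVec w0 s - v s) ^ 2 := by
          unfold wsq
          exact Finset.sum_congr rfl fun s _ => by rw [Pi.sub_apply, hw0]
        rw [hL, hR] at hm
        linarith
      have h2 := quad_zero hb0 hper
      linarith
    calc ∑ s, fvec γ p i dstat n μ π s * (X.mulVec wk s * (Proj μ π v s - v s))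
        = ∑ s, fvec γ p i dstat n μ π s * ((X.mulVec w0 s - v s) * X.mulVec wk s) :=
          Finset.sum_congr rfl fun s _ => by rw [hw0]; ring
      _ = 0 := hkey
  -- uniform lower bound (Lemma U)
  have hU : ∃ c > (0:ℝ), ∀ μ ∈ LM, ∀ π ∈ LP, ∀ w : Fin K → ℝ,
      c * (∑ k, w k ^ 2) ≤ ∑ s, fvec γ p i dstat n μ π s * (X.mulVec w s) ^ 2 := by
    by_contra hcon
    push_neg at hcon
    have hseq : ∀ m : ℕ, ∃ μ ∈ LM, ∃ π ∈ LP, ∃ w : Fin K → ℝ, (∑ k, w k ^ 2) = 1 ∧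
        ∑ s, fvec γ p i dstat n μ π s * (X.mulVec w s) ^ 2 < 1 / ((m : ℝ) + 1) := by
      intro m
      obtain ⟨μ, hμ, π, hπ, w, hw⟩ := hcon (1 / ((m : ℝ) + 1)) (by positivity)
      have hw0 : w ≠ 0 := by
        rintro rfl
        simp [Matrix.mulVec_zero] at hw
      obtain ⟨k0, hk0⟩ := Function.ne_iff.mp hw0
      have hk0' : (0:ℝ) < w k0 ^ 2 :=
        lt_of_le_of_ne (sq_nonneg _) (Ne.symm (pow_ne_zero 2 hk0))
      have hnw : 0 < ∑ k, w k ^ 2 :=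
        lt_of_lt_of_le hk0' (Finset.single_le_sum (fun k _ => sq_nonneg (w k))
          (Finset.mem_univ k0))
      set t : ℝ := (Real.sqrt (∑ k, w k ^ 2))⁻¹ with htdef
      have ht0 : 0 < t := by
        rw [htdef]
        exact inv_pos.mpr (Real.sqrt_pos.mpr hnw)
      have ht2 : t ^ 2 * (∑ k, w k ^ 2) = 1 := by
        rw [htdef, inv_pow, Real.sq_sqrt hnw.le]
        exact inv_mul_cancel₀ hnw.ne'
      refine ⟨μ, hμ, π, hπ, t • w, ?_, ?_⟩
      · calc ∑ k, (t • w) k ^ 2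
              = t ^ 2 * ∑ k, w k ^ 2 := by
                rw [Finset.mul_sum]
                exact Finset.sum_congr rfl fun k _ => by
                  rw [Pi.smul_apply, smul_eq_mul, mul_pow]
            _ = 1 := ht2
      · calc ∑ s, fvec γ p i dstat n μ π s * (X.mulVec (t • w) s) ^ 2
              = t ^ 2 * ∑ s, fvec γ p i dstat n μ π s * (X.mulVec w s) ^ 2 := by
                rw [Finset.mul_sum]
                refine Finset.sum_congr rfl fun s _ => ?_
                rw [Matrix.mulVec_smul, Pi.smul_apply, smul_eq_mul, mul_pow]
                ring
            _ < t ^ 2 * (1 / ((m : ℝ) + 1) * ∑ k, w k ^ 2) :=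
                mul_lt_mul_of_pos_left hw (by positivity)
            _ = 1 / ((m : ℝ) + 1) * (t ^ 2 * ∑ k, w k ^ 2) := by ring
            _ = 1 / ((m : ℝ) + 1) := by rw [ht2, mul_one]
    choose μs hμs πs hπs ws hws using hseq
    -- compactness
    have hbM : Bornology.IsBounded (Set.range μw) := by
      rw [isBounded_iff_forall_norm_le]
      refine ⟨1, ?_⟩
      rintro g ⟨y, rfl⟩
      have h := hLamM (μw y) (subset_closure (Set.mem_range_self y))
      rw [pi_norm_le_iff_of_nonneg zero_le_one]
      intro s
      rw [pi_norm_le_iff_of_nonneg zero_le_one]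
      intro a
      rw [Real.norm_eq_abs, abs_le]
      constructor
      · linarith [h.1 s a]
      · calc μw y s a ≤ ∑ a', μw y s a' :=
            Finset.single_le_sum (fun a' _ => (h.1 s a').le) (Finset.mem_univ a)
          _ = 1 := h.2.1 s
    have hbP : Bornology.IsBounded (Set.range πw) := by
      rw [isBounded_iff_forall_norm_le]
      refine ⟨1, ?_⟩
      rintro g ⟨y, rfl⟩
      have h := hLamPi (πw y) (subset_closure (Set.mem_range_self y))
      rw [pi_norm_le_iff_of_nonneg zero_le_one]
      intro s
      rw [pi_norm_le_iff_of_nonneg zero_le_one]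
      intro a
      rw [Real.norm_eq_abs, abs_le]
      constructor
      · linarith [h.1 s a]
      · calc πw y s a ≤ ∑ a', πw y s a' :=
            Finset.single_le_sum (fun a' _ => h.1 s a') (Finset.mem_univ a)
          _ = 1 := h.2 s
    have hKM : IsCompact LM := hbM.isCompact_closure
    have hKP : IsCompact LP := hbP.isCompact_closure
    set SW : Set (Fin K → ℝ) := {w | ∑ k, w k ^ 2 = 1} with hSWdef
    have hKW : IsCompact SW := by
      apply Metric.isCompact_of_isClosed_isBounded
      · exact isClosed_eq (continuous_finset_sum _ fun k _ => (continuous_apply k).pow 2)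
          continuous_const
      · rw [isBounded_iff_forall_norm_le]
        refine ⟨1, fun g hg => ?_⟩
        rw [pi_norm_le_iff_of_nonneg zero_le_one]
        intro k
        rw [Real.norm_eq_abs, abs_le]
        have h1 : g k ^ 2 ≤ 1 := by
          rw [← hg]
          exact Finset.single_le_sum (fun k' _ => sq_nonneg (g k')) (Finset.mem_univ k)
        constructor <;> nlinarith
    set SD : Set (S → ℝ) := {d | (∀ s, 0 ≤ d s) ∧ ∑ s, d s = 1} with hSDdef
    have hKD : IsCompact SD := by
      apply Metric.isCompact_of_isClosed_isBounded
      · have : SD = (⋂ s, {d : S → ℝ | 0 ≤ d s}) ∩ {d | ∑ s, d s = 1} := by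
          ext d
          simp [hSDdef, Set.mem_iInter]
        rw [this]
        exact IsClosed.inter
          (isClosed_iInter fun s => isClosed_le continuous_const (continuous_apply s))
          (isClosed_eq (continuous_finset_sum _ fun s _ => continuous_apply s) continuous_const)
      · rw [isBounded_iff_forall_norm_le]
        refine ⟨1, fun g hg => ?_⟩
        rw [pi_norm_le_iff_of_nonneg zero_le_one]
        intro s
        rw [Real.norm_eq_abs, abs_le]
        constructor
        · linarith [hg.1 s]
        · calc g s ≤ ∑ s', g s' :=
              Finset.single_le_sum (fun s' _ => hg.1 s') (Finset.mem_univ s)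
            _ = 1 := hg.2
    have hbig : IsCompact ((LM ×ˢ LP) ×ˢ (SW ×ˢ SD)) := (hKM.prod hKP).prod (hKW.prod hKD)
    set seq : ℕ → ((S → A → ℝ) × (S → A → ℝ)) × ((Fin K → ℝ) × (S → ℝ)) :=
      fun m => ((μs m, πs m), (ws m, dstat (μs m))) with hseqdef
    have hmem : ∀ m, seq m ∈ (LM ×ˢ LP) ×ˢ (SW ×ˢ SD) := by
      intro m
      exact ⟨⟨hμs m, hπs m⟩, ⟨(hws m).1,
        ⟨fun s => ((hdstat _ (hμs m)).1 s).le, (hdstat _ (hμs m)).2.1⟩⟩⟩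
    obtain ⟨L, hLmem, φ, hφ, hconv⟩ := hbig.tendsto_subseq hmem
    obtain ⟨⟨μ', π'⟩, w', d'⟩ := L
    have hμ' : μ' ∈ LM := hLmem.1.1
    have hπ' : π' ∈ LP := hLmem.1.2
    have hw'1 : (∑ k, w' k ^ 2) = 1 := hLmem.2.1
    have hd' : d' ∈ SD := hLmem.2.2
    have hμt : Filter.Tendsto (fun m => μs (φ m)) Filter.atTop (nhds μ') :=
      ((continuous_fst.comp continuous_fst).tendsto _).comp hconv
    have hdt : Filter.Tendsto (fun m => dstat (μs (φ m))) Filter.atTop (nhds d') :=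
      ((continuous_snd.comp continuous_snd).tendsto _).comp hconv
    -- the limit d' is stationary for μ'
    have hstat : ∀ s', ∑ s, d' s * Pmat p μ' s s' = d' s' := by
      intro s'
      have hGcont : Continuous (fun z : (S → A → ℝ) × (S → ℝ) =>
          ∑ s, z.2 s * Pmat p z.1 s s') := by
        apply continuous_finset_sum
        intro s _
        refine ((continuous_apply s).comp continuous_snd).mul ?_
        show Continuous fun z : (S → A → ℝ) × (S → ℝ) => ∑ a, z.1 s a * p s a s'
        exact continuous_finset_sum _ fun a _ =>
          (by fun_prop)
      have h1 : Filter.Tendsto (fun m => (μs (φ m), dstat (μs (φ m))))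
          Filter.atTop (nhds (μ', d')) := hμt.prodMk_nhds hdt
      have h2 := (hGcont.tendsto (μ', d')).comp h1
      have h3 : ((fun z : (S → A → ℝ) × (S → ℝ) => ∑ s, z.2 s * Pmat p z.1 s s') ∘
          (fun m => (μs (φ m), dstat (μs (φ m))))) = fun m => dstat (μs (φ m)) s' :=
        funext fun m => (hdstat _ (hμs (φ m))).2.2 s'
      rw [h3] at h2
      exact tendsto_nhds_unique h2 (((continuous_apply s').tendsto d').comp hdt)
    -- hence d' is the stationary distribution of μ'
    obtain ⟨T, hT⟩ := (hLamM μ' hμ').2.2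
    have hd'eq : d' = dstat μ' :=
      stat_unique (Pmat p μ') (T + 1) hT d' (dstat μ') hd'.1 hd'.2 hstat
        (fun s => (hdstat μ' hμ').1 s) (hdstat μ' hμ').2.1 (hdstat μ' hμ').2.2
    -- pass to the limit in the objective
    have hΦt := ((Phi_cont γ p i n X).tendsto _).comp hconv
    have hub : ∀ m, Phi γ p i n X (seq (φ m)) ≤ 1 / ((m : ℝ) + 1) := by
      intro m
      have h1 : Phi γ p i n X (seq (φ m))
          = ∑ s, fvec γ p i dstat n (μs (φ m)) (πs (φ m)) s * (X.mulVec (ws (φ m)) s) ^ 2 := rfl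
      have h2 := (hws (φ m)).2
      have h3 : 1 / ((φ m : ℝ) + 1) ≤ 1 / ((m : ℝ) + 1) := by
        apply one_div_le_one_div_of_le (by positivity)
        have hcast : (m : ℝ) ≤ (φ m : ℝ) := Nat.cast_le.mpr (hφ.id_le m)
        linarith
      rw [h1]
      linarith
    have hz : Filter.Tendsto (fun m : ℕ => 1 / ((m : ℝ) + 1)) Filter.atTop (nhds 0) :=
      tendsto_one_div_add_atTop_nhds_zero_nat
    have hle0 : Phi γ p i n X ((μ', π'), (w', d')) ≤ 0 :=
      le_of_tendsto_of_tendsto' hΦt hz hub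
    have hw'0 : w' ≠ 0 := by
      rintro rfl
      simp at hw'1
    have hpos := hpd μ' hμ' π' hπ' w' hw'0
    rw [quad_id] at hpos
    have hPhiEq : Phi γ p i n X ((μ', π'), (w', d'))
        = ∑ s, fvec γ p i dstat n μ' π' s * (X.mulVec w' s) ^ 2 := by
      rw [hd'eq]; rfl
    linarith
  obtain ⟨c, hcpos, hc⟩ := hU
  -- choose the step-size threshold
  set SX2 : ℝ := ∑ k, ∑ s, X s k ^ 2 with hSX2def
  have hSX2nn : 0 ≤ SX2 :=
    Finset.sum_nonneg fun k _ => Finset.sum_nonneg fun s _ => sq_nonneg _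
  have hsγ1 : Real.sqrt γ < 1 := by
    rw [show (1:ℝ) = Real.sqrt 1 from (Real.sqrt_one).symm]
    exact Real.sqrt_lt_sqrt hγ0 hγ1
  set δ : ℝ := 1 - Real.sqrt γ with hδdef
  have hδpos : 0 < δ := by rw [hδdef]; linarith
  refine ⟨min (δ / (4 * F * SX2 + 1)) (1 / (δ * c)), lt_min (by positivity) (by positivity), ?_⟩
  intro η hη0 hηlt
  have hη1 : η * (4 * F * SX2 + 1) ≤ δ := by
    have h := lt_of_lt_of_le hηlt (min_le_left _ _)
    rw [lt_div_iff₀ (by positivity)] at h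
    exact h.le
  have hη2 : η * (δ * c) < 1 := by
    have h := lt_of_lt_of_le hηlt (min_le_right _ _)
    rw [lt_div_iff₀ (by positivity)] at h
    linarith
  have hρ0 : 0 < 1 - η * δ * c := by nlinarith
  have hρ1 : 1 - η * δ * c < 1 := by nlinarith [mul_pos (mul_pos hη0 hδpos) hcpos]
  refine ⟨Real.sqrt (1 - η * δ * c), Real.sqrt_pos.mpr hρ0, ?_, ?_⟩
  · have h := Real.sqrt_lt_sqrt hρ0.le hρ1
    rwa [Real.sqrt_one] at h
  intro μ hμ π hπ w
  set f : S → ℝ := fvec γ p i dstat n μ π with hfdef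
  set wst : Fin K → ℝ := wfix μ π with hwstdef
  set Tv : S → ℝ := bellman γ p r π (X.mulVec w) with hTvdef
  have hf0 : ∀ s, 0 ≤ f s := hfpos μ hμ π hπ
  have hfFs : ∀ s, f s ≤ F := hfF μ hμ π hπ
  -- contraction hypothesis, squared
  have hcon := hcontr μ hμ π hπ (X.mulVec w) (X.mulVec wst)
  rw [hwfix μ hμ π hπ] at hcon
  have hA0 : 0 ≤ wsq f (Proj μ π Tv - X.mulVec wst) :=
    Finset.sum_nonneg fun s _ => mul_nonneg (hf0 s) (sq_nonneg _)
  have hB0 : 0 ≤ wsq f (X.mulVec w - X.mulVec wst) :=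
    Finset.sum_nonneg fun s _ => mul_nonneg (hf0 s) (sq_nonneg _)
  have hq : wsq f (Proj μ π Tv - X.mulVec wst) ≤ γ * wsq f (X.mulVec w - X.mulVec wst) := by
    have h2 := pow_le_pow_left₀ (Real.sqrt_nonneg _) hcon 2
    rw [Real.sq_sqrt hA0, mul_pow, Real.sq_sqrt hγ0, Real.sq_sqrt hB0] at h2
    exact h2
  -- orthogonality, per column
  have horth' : ∀ k : Fin K, ∑ s, f s * (X s k * (Proj μ π Tv s - Tv s)) = 0 := by
    intro k
    have h := horth μ hμ π hπ Tv (Pi.single k 1)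
    simp only [Matrix.mulVec_single, MulOpposite.op_one, one_smul, Matrix.col_apply, mul_one] at h
    exact h
  -- lower bound
  have hlb := hc μ hμ π hπ (w - wst)
  simp only [Matrix.mulVec_sub, Pi.sub_apply] at hlb
  -- key estimate
  have hkey : ∑ k, (w k + η * ((Xᵀ * Matrix.diagonal f).mulVec (Tv - X.mulVec w)) k
        - wst k) ^ 2 ≤ (1 - η * δ * c) * ∑ k, (w k - wst k) ^ 2 := by
    have h := key_estimate X f γ F c η hγ0 hγ1 hF0 hf0 hfFs hcpos hη0
      (by rw [hδdef] at hη1; rw [hSX2def] at hη1; exact hη1)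
      w wst Tv (Proj μ π Tv) horth' hq hlb
    calc ∑ k, (w k + η * ((Xᵀ * Matrix.diagonal f).mulVec (Tv - X.mulVec w)) k - wst k) ^ 2
        ≤ (1 - η * (1 - Real.sqrt γ) * c) * ∑ k, (w k - wst k) ^ 2 := h
      _ = (1 - η * δ * c) * ∑ k, (w k - wst k) ^ 2 := by rw [hδdef]
  calc Real.sqrt (∑ k, (w k + η * ((Xᵀ * Matrix.diagonal f).mulVec
        (Tv - X.mulVec w)) k - wst k) ^ 2)
      ≤ Real.sqrt ((1 - η * δ * c) * ∑ k, (w k - wst k) ^ 2) := Real.sqrt_le_sqrt hkey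
    _ = Real.sqrt (1 - η * δ * c) * Real.sqrt (∑ k, (w k - wst k) ^ 2) :=
        Real.sqrt_mul hρ0.le _


end
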